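/- For the Lyapunov functional W(ψ) = d(ψ, Tψ) with d(φ₁,φ₂) = min_{c∈ℝ}‖φ₁−φ₂+c‖_∞, the min-shifted Bellman operator satisfies W(T̂ψ) ≤ W(ψ) for every continuous ψ : X → ℝ; moreover the decoupled inequalities max_x[T̂ψ(x) − T(T̂ψ)(x)] ≤ max_x[ψ(x) − Tψ(x)] and min_x[T̂ψ(x) − T(T̂ψ)(x)] ≥ min_x[ψ(x) − Tψ(x)] hold. -/

import Mathlib

/-- The Lyapunov functional W(ψ) = d(ψ, Tψ) is non-increasing along the min-shifted
Bellman iteration, together with the decoupled max/min inequalities. -/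
theorem min_shifted_lyapunov
    {X U : Type*} [MetricSpace X] [CompactSpace X] [Nonempty X] [MetricSpace U]
    (Z : Set (X × U)) (hZ : IsCompact Z) (hsec : ∀ x : X, ∃ u : U, (x, u) ∈ Z)
    (f : X × U → X) (hf : ContinuousOn f Z)
    (ℓ : X × U → ℝ) (hℓ : ContinuousOn ℓ Z)
    (T : (X → ℝ) → X → ℝ)
    (hT : ∀ ψ : X → ℝ, ∀ x : X,
      T ψ x = sInf ((fun u => ℓ (x, u) + ψ (f (x, u))) '' {u : U | (x, u) ∈ Z}))    (That : (X → ℝ) → X → ℝ)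
    (hThat : ∀ ψ : X → ℝ, ∀ x : X, That ψ x =
      min (ψ x) (T ψ x + ((⨆ y, (ψ y - T ψ y)) / 2 + (⨅ y, (ψ y - T ψ y)) / 2)))
    (ψ : X → ℝ) (hψ : Continuous ψ) :
    ((⨅ c : ℝ, ⨆ x, |That ψ x - T (That ψ) x + c|) ≤
        ⨅ c : ℝ, ⨆ x, |ψ x - T ψ x + c|) ∧
    ((⨆ x, (That ψ x - T (That ψ) x)) ≤ ⨆ x, (ψ x - T ψ x)) ∧
    ((⨅ x, (ψ x - T ψ x)) ≤ ⨅ x, (That ψ x - T (That ψ) x)) := by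
  obtain ⟨x₀⟩ := ‹Nonempty X›
  -- bounds on ℓ over Z
  have hZne : Z.Nonempty := ⟨(x₀, (hsec x₀).choose), (hsec x₀).choose_spec⟩
  have hℓcomp : IsCompact (ℓ '' Z) := hZ.image_of_continuousOn hℓ
  obtain ⟨M₀, hM₀⟩ := hℓcomp.bddAbove
  obtain ⟨m₀, hm₀⟩ := hℓcomp.bddBelow
  have hℓub : ∀ z ∈ Z, ℓ z ≤ M₀ := fun z hz => hM₀ (Set.mem_image_of_mem ℓ hz)
  have hℓlb : ∀ z ∈ Z, m₀ ≤ ℓ z := fun z hz => hm₀ (Set.mem_image_of_mem ℓ hz)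
  -- bounds on ψ
  have hψcomp : IsCompact (Set.range ψ) := isCompact_range hψ
  obtain ⟨M₁, hM₁⟩ := hψcomp.bddAbove
  obtain ⟨m₁, hm₁⟩ := hψcomp.bddBelow
  have hψub : ∀ y, ψ y ≤ M₁ := fun y => hM₁ (Set.mem_range_self y)
  have hψlb : ∀ y, m₁ ≤ ψ y := fun y => hm₁ (Set.mem_range_self y)
  -- generic facts about T on bounded functions
  have hTlb : ∀ (φ : X → ℝ) (m : ℝ), (∀ y, m ≤ φ y) → ∀ x, m₀ + m ≤ T φ x := by
    intro φ m hm x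
    rw [hT]
    obtain ⟨u, hu⟩ := hsec x
    refine le_csInf ⟨_, Set.mem_image_of_mem _ hu⟩ ?_
    rintro y ⟨v, hv, rfl⟩
    exact add_le_add (hℓlb _ hv) (hm _)
  have hbdd : ∀ (φ : X → ℝ) (m : ℝ) (x : X), (∀ y, m ≤ φ y) →
      BddBelow ((fun u => ℓ (x, u) + φ (f (x, u))) '' {u : U | (x, u) ∈ Z}) := by
    intro φ m x hm
    refine ⟨m₀ + m, ?_⟩
    rintro y ⟨v, hv, rfl⟩
    exact add_le_add (hℓlb _ hv) (hm _)
  have hTub : ∀ (φ : X → ℝ) (m M : ℝ), (∀ y, m ≤ φ y) → (∀ y, φ y ≤ M) →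
      ∀ x, T φ x ≤ M₀ + M := by
    intro φ m M hm hM x
    rw [hT]
    obtain ⟨u, hu⟩ := hsec x
    exact csInf_le_of_le (hbdd φ m x hm) (Set.mem_image_of_mem _ hu)
      (add_le_add (hℓub _ hu) (hM _))
  have hTmono : ∀ (φ₁ φ₂ : X → ℝ) (m : ℝ), (∀ y, m ≤ φ₁ y) → (∀ y, φ₁ y ≤ φ₂ y) →
      ∀ x, T φ₁ x ≤ T φ₂ x := by
    intro φ₁ φ₂ m hm h12 x
    rw [hT, hT]
    obtain ⟨u, hu⟩ := hsec x
    refine le_csInf ⟨_, Set.mem_image_of_mem _ hu⟩ ?_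
    rintro y ⟨v, hv, rfl⟩
    exact le_trans (csInf_le (hbdd φ₁ m x hm) (Set.mem_image_of_mem _ hv))
      (add_le_add le_rfl (h12 _))
  have hTshift : ∀ (φ : X → ℝ) (m e : ℝ), (∀ y, m ≤ φ y) →
      ∀ x, T (fun y => φ y + e) x = T φ x + e := by
    intro φ m e hm x
    rw [hT, hT]
    obtain ⟨u, hu⟩ := hsec x
    apply le_antisymm
    · have h2 : sInf ((fun u => ℓ (x, u) + (φ (f (x, u)) + e)) '' {u : U | (x, u) ∈ Z}) - e ≤
          sInf ((fun u => ℓ (x, u) + φ (f (x, u))) '' {u : U | (x, u) ∈ Z}) := by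
        refine le_csInf ⟨_, Set.mem_image_of_mem _ hu⟩ ?_
        rintro y ⟨v, hv, rfl⟩
        have := csInf_le (hbdd (fun y => φ y + e) (m + e) x
            (fun y => by show m + e ≤ φ y + e; linarith [hm y]))
          (Set.mem_image_of_mem (fun u => ℓ (x, u) + (φ (f (x, u)) + e)) hv)
        simp only at this ⊢
        linarith
      linarith
    · refine le_csInf ⟨_, Set.mem_image_of_mem _ hu⟩ ?_
      rintro y ⟨v, hv, rfl⟩
      have := csInf_le (hbdd φ m x hm) (Set.mem_image_of_mem (fun u => ℓ (x, u) + φ (f (x, u))) hv)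
      simp only at this ⊢
      linarith
  -- bounds on g = ψ - Tψ
  have hTψlb : ∀ x, m₀ + m₁ ≤ T ψ x := hTlb ψ m₁ hψlb
  have hTψub : ∀ x, T ψ x ≤ M₀ + M₁ := hTub ψ m₁ M₁ hψlb hψub
  set a : ℝ := ⨆ y, (ψ y - T ψ y) with ha
  set b : ℝ := ⨅ y, (ψ y - T ψ y) with hb
  have hgBddA : BddAbove (Set.range fun y => ψ y - T ψ y) :=
    ⟨M₁ - (m₀ + m₁), by rintro y ⟨x, rfl⟩; have := hTψlb x; have := hψub x; simp; linarith⟩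
  have hgBddB : BddBelow (Set.range fun y => ψ y - T ψ y) :=
    ⟨m₁ - (M₀ + M₁), by rintro y ⟨x, rfl⟩; have := hTψub x; have := hψlb x; simp; linarith⟩
  have hga : ∀ x, ψ x - T ψ x ≤ a := fun x => le_ciSup hgBddA x
  have hgb : ∀ x, b ≤ ψ x - T ψ x := fun x => ciInf_le hgBddB x
  have hba : b ≤ a := le_trans (hgb x₀) (hga x₀)
  set c : ℝ := a / 2 + b / 2 with hc
  set d : ℝ := a / 2 - b / 2 with hd
  have hd0 : 0 ≤ d := by rw [hd]; linarith
  have hφ : ∀ x, That ψ x = min (ψ x) (T ψ x + c) := fun x => hThat ψ x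
  -- pointwise sandwich for φ = That ψ
  have hφle : ∀ x, That ψ x ≤ ψ x := fun x => by rw [hφ]; exact min_le_left _ _
  have hφge : ∀ x, ψ x + -d ≤ That ψ x := by
    intro x
    rw [hφ]
    refine le_min (by linarith) ?_
    have := hga x
    rw [hc, hd]; linarith
  have hφleT : ∀ x, That ψ x ≤ T ψ x + c := fun x => by rw [hφ]; exact min_le_right _ _
  have hφgeT : ∀ x, T ψ x + b ≤ That ψ x := by
    intro x
    rw [hφ]
    refine le_min (by linarith [hgb x]) (by rw [hc]; linarith)
  -- bounds for T (That ψ)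
  have hφlb : ∀ y, m₁ + -d ≤ That ψ y := fun y => le_trans (by linarith [hψlb y]) (hφge y)
  have hTφle : ∀ x, T (That ψ) x ≤ T ψ x := hTmono (That ψ) ψ (m₁ + -d) hφlb hφle
  have hTφge : ∀ x, T ψ x - d ≤ T (That ψ) x := by
    intro x
    have h1 : T (fun y => ψ y + -d) x = T ψ x + -d := hTshift ψ m₁ (-d) hψlb x
    have h2 : T (fun y => ψ y + -d) x ≤ T (That ψ) x :=
      hTmono _ (That ψ) (m₁ + -d) (fun y => by linarith [hψlb y]) hφge x
    linarith
  -- pointwise bounds for h = That ψ - T (That ψ)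
  have hha : ∀ x, That ψ x - T (That ψ) x ≤ a := by
    intro x
    have := hφleT x; have := hTφge x
    rw [hc, hd] at *
    linarith
  have hhb : ∀ x, b ≤ That ψ x - T (That ψ) x := by
    intro x
    have := hφgeT x; have := hTφle x
    linarith
  refine ⟨?_, ciSup_le hha, le_ciInf hhb⟩
  -- first claim
  have hLHS : (⨅ c' : ℝ, ⨆ x, |That ψ x - T (That ψ) x + c'|) ≤ d := by
    refine ciInf_le_of_le ⟨0, ?_⟩ (-c) ?_
    · rintro y ⟨c', rfl⟩
      exact Real.iSup_nonneg (fun x => abs_nonneg _)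
    · refine ciSup_le fun x => abs_le.mpr ⟨?_, ?_⟩
      · have := hhb x; rw [hc, hd] at *; linarith
      · have := hha x; rw [hc, hd] at *; linarith
  refine le_trans hLHS (le_ciInf fun c' => ?_)
  -- d ≤ ⨆ x, |ψ x - T ψ x + c'|
  set S : ℝ := ⨆ x, |ψ x - T ψ x + c'| with hS
  have hSbdd : BddAbove (Set.range fun x => |ψ x - T ψ x + c'|) := by
    refine ⟨max |m₁ - (M₀ + M₁) + c'| |M₁ - (m₀ + m₁) + c'|, ?_⟩
    rintro y ⟨x, rfl⟩
    refine abs_le_max_abs_abs ?_ ?_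
    · have := hTψub x; have := hψlb x; linarith
    · have := hTψlb x; have := hψub x; linarith
  have hSx : ∀ x, |ψ x - T ψ x + c'| ≤ S := fun x => le_ciSup hSbdd x
  have haS : a + c' ≤ S := by
    have : a ≤ S - c' := ciSup_le fun x => by
      have h1 := le_abs_self (ψ x - T ψ x + c')
      have := hSx x; linarith
    linarith
  have hbS : -S ≤ b + c' := by
    have : -S - c' ≤ b := le_ciInf fun x => by
      have h1 := neg_abs_le (ψ x - T ψ x + c')
      have := hSx x; linarith
    linarith
  rw [hd]
  linarith
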